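/- Let F(x,λ) = (f̄(x,λ), λ) and F'(x,λ) = (f̄'(x,λ), λ) be one-parameter unfoldings of map-germs f, f' : (ℂ^n,0) → (ℂ^p,0) respectively, and suppose F and F' are φ-equivalent. Let g : (ℂ^d,0) → (ℂ,0) be a function germ that is R-equivalent to a quasi-homogeneous function germ. Then the augmentations A_{F,g}(f) and A_{F',g}(f') are A-equivalent. -/

import Mathlib

open Filter Topology
open scoped ContDiff

noncomputable section

variable {E F : Type*}

/-- A map-germ at the origin: a holomorphic map defined near `0` sending `0` to `0`. -/
def IsMapGerm [NormedAddCommGroup E] [NormedSpace ℂ E]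
    [NormedAddCommGroup F] [NormedSpace ℂ F] (f : E → F) : Prop :=
  AnalyticAt ℂ f 0 ∧ f 0 = 0

/-- A germ of biholomorphism of `(E,0)`: a map-germ whose derivative at `0` is invertible. -/
def IsBiholoGerm [NormedAddCommGroup E] [NormedSpace ℂ E] (h : E → E) : Prop :=
  IsMapGerm h ∧ ∃ e : E ≃L[ℂ] E, fderiv ℂ h 0 = (e : E →L[ℂ] E)

/-- `A`-equivalence of map-germs. -/
def AEquiv [NormedAddCommGroup E] [NormedSpace ℂ E]
    [NormedAddCommGroup F] [NormedSpace ℂ F] (f f' : E → F) : Prop :=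
  ∃ H : E → E, ∃ K : F → F, IsBiholoGerm H ∧ IsBiholoGerm K ∧
    f' ∘ H =ᶠ[𝓝 0] K ∘ f

/-- A quasi-homogeneous function germ. -/
def QuasiHomogeneous (d : ℕ) (g : (Fin d → ℂ) → ℂ) : Prop :=
  ∃ (w : ℕ) (wi : Fin d → ℕ), 0 < w ∧ (∀ i, 0 < wi i) ∧
    ∀ t : ℂ, ∀ᶠ z in 𝓝 0, g (fun i => t ^ wi i * z i) = t ^ w * g z

/-- φ-equivalence (with φ the projection on the parameter) of the one-parameter
unfoldings determined by `fbar` and `fbar'`. -/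
def PhiEquivUnf (n p : ℕ) (fbar fbar' : (Fin n → ℂ) × ℂ → (Fin p → ℂ)) : Prop :=
  ∃ (hbar : (Fin n → ℂ) × ℂ → (Fin n → ℂ)) (kbar : (Fin p → ℂ) × ℂ → (Fin p → ℂ))
    (l : ℂ → ℂ),
    IsBiholoGerm (fun w : (Fin n → ℂ) × ℂ => (hbar w, l w.2)) ∧
    IsBiholoGerm (fun W : (Fin p → ℂ) × ℂ => (kbar W, l W.2)) ∧
    IsBiholoGerm l ∧
    ((fun w : (Fin n → ℂ) × ℂ => (fbar' w, w.2)) ∘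
        (fun w : (Fin n → ℂ) × ℂ => (hbar w, l w.2)))
      =ᶠ[𝓝 0]
    ((fun W : (Fin p → ℂ) × ℂ => (kbar W, l W.2)) ∘
        (fun w : (Fin n → ℂ) × ℂ => (fbar w, w.2)))


/-- Any injective continuous linear endomorphism of a finite-dimensional complex
space is a continuous linear equivalence. -/
lemma exists_cle_of_injective {E : Type*} [NormedAddCommGroup E] [NormedSpace ℂ E]
    [FiniteDimensional ℂ E] (T : E →L[ℂ] E) (hT : Function.Injective T) :
    ∃ e : E ≃L[ℂ] E, (e : E →L[ℂ] E) = T := by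
  have hbij : Function.Bijective (T : E →ₗ[ℂ] E) :=
    ⟨hT, LinearMap.injective_iff_surjective.1 hT⟩
  exact ⟨(LinearEquiv.ofBijective (T : E →ₗ[ℂ] E) hbij).toContinuousLinearEquiv,
    by ext x; rfl⟩

/-- Analytic `w`-th root: if `l` is analytic at `0`, vanishes at `0` with nonzero
derivative, then `l lam = t lam ^ w * lam` for an analytic `t` nonvanishing at `0`. -/
lemma exists_root {l : ℂ → ℂ} (hl : AnalyticAt ℂ l 0) (hl0 : l 0 = 0)
    (hd : deriv l 0 ≠ 0) {w : ℕ} (hw : 0 < w) :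
    ∃ t : ℂ → ℂ, AnalyticAt ℂ t 0 ∧ t 0 ≠ 0 ∧
      ∀ᶠ lam in 𝓝 (0 : ℂ), t lam ^ w * lam = l lam := by
  obtain ⟨p, hp⟩ := hl
  set u : ℂ → ℂ := dslope l 0 with hu
  have hua : AnalyticAt ℂ u 0 := ⟨p.fslope, hp.has_fpower_series_dslope_fslope⟩
  have hu0 : u 0 = deriv l 0 := dslope_same l 0
  have humul : ∀ lam : ℂ, u lam * lam = l lam := by
    intro lam
    rcases eq_or_ne lam 0 with h | h
    · simp [h, hl0]
    · rw [hu, dslope_of_ne l h, slope_def_field]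
      field_simp [hl0]
      simp [hl0]
  obtain ⟨c, hc⟩ := IsAlgClosed.exists_pow_nat_eq (deriv l 0) hw
  have hcne : c ≠ 0 := by
    intro h
    exact hd (by rw [← hc, h, zero_pow hw.ne'])
  have hwc : (w : ℂ) ≠ 0 := Nat.cast_ne_zero.2 hw.ne'
  refine ⟨fun lam => c * Complex.exp (Complex.log (u lam / deriv l 0) / w), ?_, ?_, ?_⟩
  · apply analyticAt_const.mul
    apply AnalyticAt.cexp
    apply AnalyticAt.div _ analyticAt_const hwc
    apply AnalyticAt.clog (hua.div analyticAt_const hd)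
    simp only [Pi.div_apply, hu0, div_self hd]
    exact Complex.one_mem_slitPlane
  · simpa [hu0, div_self hd, Complex.log_one] using hcne
  · have hne : ∀ᶠ lam in 𝓝 (0 : ℂ), u lam ≠ 0 :=
      hua.continuousAt.eventually_ne (by rw [hu0]; exact hd)
    filter_upwards [hne] with lam hune
    have h2 : (w : ℂ) * (Complex.log (u lam / deriv l 0) / w)
        = Complex.log (u lam / deriv l 0) := by field_simp
    have h1 : (c * Complex.exp (Complex.log (u lam / deriv l 0) / w)) ^ w = u lam := by
      rw [mul_pow, hc, ← Complex.exp_nat_mul, h2,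
        Complex.exp_log (div_ne_zero hune hd)]
      field_simp
    rw [h1, humul]

/-- The quasi-homogeneity identity holds uniformly: for bounded `t` and small `z`. -/
lemma qh_uniform {d : ℕ} {g₀ : (Fin d → ℂ) → ℂ} (hg₀ : AnalyticAt ℂ g₀ 0)
    {w : ℕ} {wi : Fin d → ℕ} (hwi : ∀ i, 0 < wi i)
    (hqh : ∀ t : ℂ, ∀ᶠ z in 𝓝 0, g₀ (fun i => t ^ wi i * z i) = t ^ w * g₀ z)
    (C : ℝ) :
    ∃ ε > 0, ∀ t : ℂ, ‖t‖ ≤ C → ∀ z : Fin d → ℂ, ‖z‖ < ε →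
      g₀ (fun i => t ^ wi i * z i) = t ^ w * g₀ z := by
  obtain ⟨r, hr, hball⟩ : ∃ r > 0, ∀ y ∈ Metric.ball (0 : Fin d → ℂ) r, AnalyticAt ℂ g₀ y := by
    have h := hg₀.eventually_analyticAt
    rw [Metric.eventually_nhds_iff_ball] at h
    exact h
  set W : ℕ := ∑ i, wi i with hW
  set R : ℝ := 2 + 2 * max C 0 with hR
  have hR1 : (1 : ℝ) ≤ R := by
    have : (0:ℝ) ≤ max C 0 := le_max_right _ _
    simp only [hR]; linarith
  have hR0 : (0 : ℝ) ≤ R := by linarith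
  set M : ℝ := R ^ W with hM
  have hM0 : 0 < M := pow_pos (by linarith) W
  have hM1 : (1 : ℝ) ≤ M := one_le_pow₀ hR1
  refine ⟨r / M, div_pos hr hM0, ?_⟩
  intro t ht z hz
  have hC0 : 0 ≤ C := le_trans (norm_nonneg t) ht
  -- membership bound
  have key : ∀ a : ℂ, ‖a‖ ≤ R → (fun i => a ^ wi i * z i) ∈ Metric.ball (0 : Fin d → ℂ) r := by
    intro a ha
    rw [Metric.mem_ball, dist_zero_right]
    rw [pi_norm_lt_iff hr]
    intro i
    have h1 : ‖a ^ wi i * z i‖ = ‖a‖ ^ wi i * ‖z i‖ := by rw [norm_mul, norm_pow]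
    have h2 : ‖a‖ ^ wi i ≤ R ^ wi i := pow_le_pow_left₀ (norm_nonneg a) ha _
    have h3 : R ^ wi i ≤ M := by
      rw [hM]
      exact pow_le_pow_right₀ hR1 (Finset.single_le_sum (f := fun i => wi i)
        (fun i _ => Nat.zero_le _) (Finset.mem_univ i))
    have h4 : ‖z i‖ ≤ ‖z‖ := norm_le_pi_norm z i
    calc ‖a ^ wi i * z i‖ = ‖a‖ ^ wi i * ‖z i‖ := h1
      _ ≤ M * ‖z‖ := mul_le_mul (le_trans h2 h3) h4 (norm_nonneg _) (by linarith)
      _ < M * (r / M) := by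
          apply mul_lt_mul_of_pos_left hz hM0
      _ = r := by field_simp
  -- the slice function
  set G : ℂ → ℂ := fun s =>
    g₀ (fun i => (t * s) ^ wi i * z i) - t ^ w * g₀ (fun i => s ^ wi i * z i) with hG
  have hGan : AnalyticOnNhd ℂ G (Metric.ball (0 : ℂ) 2) := by
    intro s hs
    have hs2 : ‖s‖ ≤ 2 := by
      rw [Metric.mem_ball, dist_zero_right] at hs; linarith
    have hsR : ‖s‖ ≤ R := by
      have : (2:ℝ) ≤ R := by simp only [hR]; nlinarith [le_max_right C (0:ℝ)]
      linarith
    have htsR : ‖t * s‖ ≤ R := by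
      rw [norm_mul]
      calc ‖t‖ * ‖s‖ ≤ C * 2 := mul_le_mul ht hs2 (norm_nonneg _) hC0
        _ ≤ 2 + 2 * max C 0 := by nlinarith [le_max_left C (0:ℝ)]
    have hinner1 : AnalyticAt ℂ (fun s' : ℂ => (fun i => (t * s') ^ wi i * z i)) s := by
      apply AnalyticAt.pi
      intro i
      exact ((analyticAt_const.mul analyticAt_id).pow _).mul analyticAt_const
    have hinner2 : AnalyticAt ℂ (fun s' : ℂ => (fun i => s' ^ wi i * z i)) s := by
      apply AnalyticAt.pi
      intro i
      exact (analyticAt_id.pow _).mul analyticAt_const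
    have hcomp1 : AnalyticAt ℂ (fun s' : ℂ => g₀ (fun i => (t * s') ^ wi i * z i)) s :=
      (hball _ (key (t * s) htsR)).comp hinner1
    have hcomp2 : AnalyticAt ℂ (fun s' : ℂ => g₀ (fun i => s' ^ wi i * z i)) s :=
      (hball _ (key s hsR)).comp hinner2
    exact hcomp1.sub (analyticAt_const.mul hcomp2)
  have hG0 : G =ᶠ[𝓝 (0 : ℂ)] 0 := by
    have hcurve : Filter.Tendsto (fun s : ℂ => (fun i => s ^ wi i * z i)) (𝓝 0)
        (𝓝 (0 : Fin d → ℂ)) := by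
      have hcont : Continuous (fun s : ℂ => (fun i => s ^ wi i * z i)) :=
        continuous_pi fun i => (continuous_pow (wi i)).mul continuous_const
      have h0 : (fun i => (0:ℂ) ^ wi i * z i) = (0 : Fin d → ℂ) := by
        funext i; simp [zero_pow (hwi i).ne']
      simpa [h0] using hcont.tendsto 0
    filter_upwards [hcurve.eventually (hqh t)] with s hs
    have harg : (fun i => (t * s) ^ wi i * z i) = fun i => t ^ wi i * (s ^ wi i * z i) := by
      funext i; rw [mul_pow]; ring
    simp only [hG, Pi.zero_apply, harg, hs, sub_self]
  have heq := hGan.eqOn_zero_of_preconnected_of_eventuallyEq_zero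
    (convex_ball (0:ℂ) 2).isPreconnected (Metric.mem_ball_self (by norm_num)) hG0
  have h1 : G 1 = 0 := heq (by simp [Metric.mem_ball])
  have harg1 : (fun i => (t * 1) ^ wi i * z i) = fun i => t ^ wi i * z i := by
    funext i; rw [mul_one]
  have harg2 : (fun i => (1:ℂ) ^ wi i * z i) = z := by
    funext i; rw [one_pow, one_mul]
  rw [hG] at h1
  simp only [harg1, harg2] at h1
  exact sub_eq_zero.mp h1

/-- The analytic inverse function theorem for biholomorphism germs. -/
lemma exists_inverse {E : Type*} [NormedAddCommGroup E] [NormedSpace ℂ E] [CompleteSpace E]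
    {φ : E → E} (hφ : IsBiholoGerm φ) :
    ∃ χ : E → E, IsBiholoGerm χ ∧ (∀ᶠ x in 𝓝 (0 : E), χ (φ x) = x) ∧
      (∀ᶠ y in 𝓝 (0 : E), φ (χ y) = y) := by
  obtain ⟨⟨han, h0⟩, e, he⟩ := hφ
  have hF : HasFDerivAt φ (e : E →L[ℂ] E) 0 := by
    rw [← he]; exact han.differentiableAt.hasFDerivAt
  have hc : ContDiffAt ℂ ω φ 0 := han.contDiffAt
  have hn : (ω : WithTop ℕ∞) ≠ 0 := by simp
  have hs : HasStrictFDerivAt φ (e : E →L[ℂ] E) 0 := hc.hasStrictFDerivAt' hF hn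
  refine ⟨hc.localInverse hF hn, ⟨⟨?_, ?_⟩, ?_⟩, ?_, ?_⟩
  · have := hc.to_localInverse hF hn
    rw [h0] at this
    exact this.analyticAt
  · have := hc.localInverse_apply_image hF hn
    rwa [h0] at this
  · have hinv : HasStrictFDerivAt (hc.localInverse hF hn)
        ((e.symm : E →L[ℂ] E)) (φ 0) := hs.to_localInverse
    rw [h0] at hinv
    exact ⟨e.symm, hinv.hasFDerivAt.fderiv⟩
  · exact hs.eventually_left_inverse
  · have := hs.eventually_right_inverse
    rwa [h0] at this

/-- Composition of biholomorphism germs. -/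
lemma IsBiholoGerm.comp {E : Type*} [NormedAddCommGroup E] [NormedSpace ℂ E]
    {f g : E → E} (hf : IsBiholoGerm f) (hg : IsBiholoGerm g) :
    IsBiholoGerm (fun x => f (g x)) := by
  obtain ⟨⟨hfa, hf0⟩, ef, hef⟩ := hf
  obtain ⟨⟨hga, hg0⟩, eg, heg⟩ := hg
  have hfa' : AnalyticAt ℂ f (g 0) := by rw [hg0]; exact hfa
  refine ⟨⟨hfa'.comp hga, by show f (g 0) = 0; rw [hg0, hf0]⟩, eg.trans ef, ?_⟩
  have hcomp : fderiv ℂ (f ∘ g) 0 = (fderiv ℂ f (g 0)).comp (fderiv ℂ g 0) :=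
    fderiv_comp 0 hfa'.differentiableAt hga.differentiableAt
  have : fderiv ℂ (fun x => f (g x)) 0 = (fderiv ℂ f (g 0)).comp (fderiv ℂ g 0) := hcomp
  rw [this, hg0, hef, heg]
  ext x
  simp

/-- Construction of a biholomorphism germ `ψ` with `g₀ ∘ ψ = l ∘ g₀` for a
quasi-homogeneous `g₀`. -/
lemma exists_psi {d : ℕ} {g₀ : (Fin d → ℂ) → ℂ} (hg₀ : AnalyticAt ℂ g₀ 0) (hg00 : g₀ 0 = 0)
    {w : ℕ} {wi : Fin d → ℕ} (hw : 0 < w) (hwi : ∀ i, 0 < wi i)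
    (hqh : ∀ t : ℂ, ∀ᶠ z in 𝓝 0, g₀ (fun i => t ^ wi i * z i) = t ^ w * g₀ z)
    {l : ℂ → ℂ} (hl : AnalyticAt ℂ l 0) (hl0 : l 0 = 0) (hd : deriv l 0 ≠ 0) :
    ∃ ψ : (Fin d → ℂ) → (Fin d → ℂ), IsBiholoGerm ψ ∧
      (fun z => g₀ (ψ z)) =ᶠ[𝓝 0] (fun z => l (g₀ z)) := by
  obtain ⟨t, hta, ht0, htw⟩ := exists_root hl hl0 hd hw
  set τ : (Fin d → ℂ) → ℂ := fun z => t (g₀ z) with hτ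
  have hta' : AnalyticAt ℂ t (g₀ 0) := by rw [hg00]; exact hta
  have hτa : AnalyticAt ℂ τ 0 := hta'.comp hg₀
  have hτ0 : τ 0 = t 0 := by simp only [hτ, hg00]
  have hτ0ne : τ 0 ≠ 0 := by rw [hτ0]; exact ht0
  refine ⟨fun z i => τ z ^ wi i * z i, ⟨⟨?_, ?_⟩, ?_⟩, ?_⟩
  · apply AnalyticAt.pi
    intro i
    have hproj : AnalyticAt ℂ (fun z : Fin d → ℂ => z i) 0 :=
      (ContinuousLinearMap.proj (R := ℂ) (φ := fun _ : Fin d => ℂ) i).analyticAt 0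
    exact (hτa.pow _).mul hproj
  · funext i; simp
  · -- derivative
    set D : (Fin d → ℂ) →L[ℂ] (Fin d → ℂ) :=
      ContinuousLinearMap.pi (fun i => (τ 0 ^ wi i) • ContinuousLinearMap.proj i) with hD
    have hDf : HasFDerivAt (fun z i => τ z ^ wi i * z i) D 0 := by
      apply hasFDerivAt_pi.2
      intro i
      have hci : HasFDerivAt (fun z => τ z ^ wi i) (fderiv ℂ (fun z => τ z ^ wi i) 0) 0 :=
        (hτa.pow _).differentiableAt.hasFDerivAt
      have hpi : HasFDerivAt (fun z : Fin d → ℂ => z i)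
          (ContinuousLinearMap.proj (R := ℂ) (φ := fun _ : Fin d => ℂ) i) 0 :=
        hasFDerivAt_apply i 0
      have h := hci.mul' hpi
      convert h using 1
      ext ζ
      simp
      ext ζ
      simp
      ext ζ
      simp
    have hDinj : Function.Injective D := by
      intro a b hab
      funext i
      have := congrFun hab i
      simp only [hD, ContinuousLinearMap.pi_apply, ContinuousLinearMap.smul_apply,
        ContinuousLinearMap.proj_apply, smul_eq_mul] at this
      exact mul_left_cancel₀ (pow_ne_zero _ hτ0ne) this
    obtain ⟨e, he⟩ := exists_cle_of_injective D hDinj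
    exact ⟨e, by rw [hDf.fderiv, he]⟩
  · -- the germ equality
    obtain ⟨ε, hε, hkey⟩ := qh_uniform hg₀ hwi hqh (‖t 0‖ + 1)
    have hτsmall : ∀ᶠ z in 𝓝 (0 : Fin d → ℂ), ‖τ z‖ ≤ ‖t 0‖ + 1 := by
      have hball := hτa.continuousAt.preimage_mem_nhds
        (Metric.ball_mem_nhds (τ 0) one_pos)
      filter_upwards [hball] with z hz
      have : dist (τ z) (τ 0) < 1 := hz
      have h2 := norm_sub_norm_le (τ z) (τ 0)
      rw [dist_eq_norm] at this
      rw [hτ0] at *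
      linarith [le_trans h2 this.le]
    have hzsmall : ∀ᶠ z in 𝓝 (0 : Fin d → ℂ), ‖z‖ < ε := by
      filter_upwards [Metric.ball_mem_nhds (0 : Fin d → ℂ) hε] with z hz
      simpa [dist_zero_right] using hz
    have hgt : Filter.Tendsto g₀ (𝓝 0) (𝓝 0) := by
      have := hg₀.continuousAt
      rwa [ContinuousAt, hg00] at this
    have hroot : ∀ᶠ z in 𝓝 (0 : Fin d → ℂ), t (g₀ z) ^ w * g₀ z = l (g₀ z) :=
      hgt.eventually htw
    filter_upwards [hτsmall, hzsmall, hroot] with z h1 h2 h3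
    show g₀ (fun i => τ z ^ wi i * z i) = l (g₀ z)
    rw [hkey (τ z) h1 z h2]
    exact h3

/-- If `(hb, l ∘ snd)` is a biholomorphism germ, `g` a map germ and `ψ` a biholomorphism
germ, then `w ↦ (hb (w.1, g w.2), ψ w.2)` is a biholomorphism germ. -/
lemma biholo_aux {m d : ℕ} (hb : (Fin m → ℂ) × ℂ → (Fin m → ℂ)) (l : ℂ → ℂ)
    (g : (Fin d → ℂ) → ℂ) (ψ : (Fin d → ℂ) → (Fin d → ℂ))
    (hh : IsBiholoGerm (fun w : (Fin m → ℂ) × ℂ => (hb w, l w.2)))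
    (hg : IsMapGerm g) (hψ : IsBiholoGerm ψ) :
    IsBiholoGerm (fun w : (Fin m → ℂ) × (Fin d → ℂ) => (hb (w.1, g w.2), ψ w.2)) := by
  obtain ⟨⟨hha, hh0⟩, e, he⟩ := hh
  obtain ⟨⟨hψa, hψ0⟩, eψ, heψ⟩ := hψ
  obtain ⟨hga, hg0⟩ := hg
  have hb0 : hb 0 = 0 := congrArg Prod.fst hh0
  -- analyticity of the components of h
  have hba : AnalyticAt ℂ hb 0 :=
    ((ContinuousLinearMap.fst ℂ (Fin m → ℂ) ℂ).analyticAt _).comp hha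
  have hla : AnalyticAt ℂ l 0 := by
    have hin : AnalyticAt ℂ (fun lam : ℂ => (((0 : Fin m → ℂ), lam) : (Fin m → ℂ) × ℂ)) 0 :=
      analyticAt_const.prod analyticAt_id
    have h2 : AnalyticAt ℂ (fun lam : ℂ => (hb (0, lam), l lam)) 0 :=
      hha.comp_of_eq hin rfl
    exact ((ContinuousLinearMap.snd ℂ (Fin m → ℂ) ℂ).analyticAt _).comp h2
  -- derivatives
  have hhd : HasFDerivAt (fun w : (Fin m → ℂ) × ℂ => (hb w, l w.2))
      (e : ((Fin m → ℂ) × ℂ) →L[ℂ] ((Fin m → ℂ) × ℂ)) 0 := by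
    rw [← he]; exact hha.differentiableAt.hasFDerivAt
  have hψd : HasFDerivAt ψ (eψ : (Fin d → ℂ) →L[ℂ] (Fin d → ℂ)) 0 := by
    rw [← heψ]; exact hψa.differentiableAt.hasFDerivAt
  set Dg : (Fin d → ℂ) →L[ℂ] ℂ := fderiv ℂ g 0 with hDg
  have hgd : HasFDerivAt g Dg 0 := hga.differentiableAt.hasFDerivAt
  -- inner map
  set M : ((Fin m → ℂ) × (Fin d → ℂ)) →L[ℂ] ((Fin m → ℂ) × ℂ) :=
    (ContinuousLinearMap.fst ℂ (Fin m → ℂ) (Fin d → ℂ)).prod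
      (Dg.comp (ContinuousLinearMap.snd ℂ (Fin m → ℂ) (Fin d → ℂ))) with hM
  have hmd : HasFDerivAt (fun w : (Fin m → ℂ) × (Fin d → ℂ) => ((w.1, g w.2) :
      (Fin m → ℂ) × ℂ)) M 0 :=
    HasFDerivAt.prodMk (hasFDerivAt_fst) (hgd.comp 0 hasFDerivAt_snd)
  have hhd' : HasFDerivAt (fun w : (Fin m → ℂ) × ℂ => (hb w, l w.2))
      (e : ((Fin m → ℂ) × ℂ) →L[ℂ] ((Fin m → ℂ) × ℂ))
      (((0 : (Fin m → ℂ) × (Fin d → ℂ)).1, g (0 : (Fin m → ℂ) × (Fin d → ℂ)).2)) := by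
    have : (((0 : (Fin m → ℂ) × (Fin d → ℂ)).1, g (0 : (Fin m → ℂ) × (Fin d → ℂ)).2) :
        (Fin m → ℂ) × ℂ) = 0 := by
      simp [hg0]
    rw [this]; exact hhd
  have hcomp : HasFDerivAt
      (fun w : (Fin m → ℂ) × (Fin d → ℂ) => (hb (w.1, g w.2), l (g w.2)))
      (((e : ((Fin m → ℂ) × ℂ) →L[ℂ] ((Fin m → ℂ) × ℂ))).comp M) 0 :=
    hhd'.comp 0 hmd
  have h1 : HasFDerivAt (fun w : (Fin m → ℂ) × (Fin d → ℂ) => hb (w.1, g w.2))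
      ((ContinuousLinearMap.fst ℂ (Fin m → ℂ) ℂ).comp
        (((e : ((Fin m → ℂ) × ℂ) →L[ℂ] ((Fin m → ℂ) × ℂ))).comp M)) 0 :=
    (ContinuousLinearMap.fst ℂ (Fin m → ℂ) ℂ).hasFDerivAt.comp 0 hcomp
  have h2 : HasFDerivAt (fun w : (Fin m → ℂ) × (Fin d → ℂ) => ψ w.2)
      ((eψ : (Fin d → ℂ) →L[ℂ] (Fin d → ℂ)).comp
        (ContinuousLinearMap.snd ℂ (Fin m → ℂ) (Fin d → ℂ))) 0 :=
    hψd.comp 0 hasFDerivAt_snd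
  have hT : HasFDerivAt (fun w : (Fin m → ℂ) × (Fin d → ℂ) => (hb (w.1, g w.2), ψ w.2))
      (((ContinuousLinearMap.fst ℂ (Fin m → ℂ) ℂ).comp
        (((e : ((Fin m → ℂ) × ℂ) →L[ℂ] ((Fin m → ℂ) × ℂ))).comp M)).prod
       ((eψ : (Fin d → ℂ) →L[ℂ] (Fin d → ℂ)).comp
        (ContinuousLinearMap.snd ℂ (Fin m → ℂ) (Fin d → ℂ)))) 0 := HasFDerivAt.prodMk h1 h2
  set T := (((ContinuousLinearMap.fst ℂ (Fin m → ℂ) ℂ).comp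
        (((e : ((Fin m → ℂ) × ℂ) →L[ℂ] ((Fin m → ℂ) × ℂ))).comp M)).prod
       ((eψ : (Fin d → ℂ) →L[ℂ] (Fin d → ℂ)).comp
        (ContinuousLinearMap.snd ℂ (Fin m → ℂ) (Fin d → ℂ)))) with hTdef
  -- the key linear algebra: snd ∘ e vanishes on (ξ, 0)
  have hsnd : (ContinuousLinearMap.snd ℂ (Fin m → ℂ) ℂ).comp
      (e : ((Fin m → ℂ) × ℂ) →L[ℂ] ((Fin m → ℂ) × ℂ))
      = (fderiv ℂ l 0).comp (ContinuousLinearMap.snd ℂ (Fin m → ℂ) ℂ) := by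
    have ha : HasFDerivAt (fun w : (Fin m → ℂ) × ℂ => l w.2)
        ((ContinuousLinearMap.snd ℂ (Fin m → ℂ) ℂ).comp
          (e : ((Fin m → ℂ) × ℂ) →L[ℂ] ((Fin m → ℂ) × ℂ))) 0 :=
      (ContinuousLinearMap.snd ℂ (Fin m → ℂ) ℂ).hasFDerivAt.comp 0 hhd
    have hl' : HasFDerivAt l (fderiv ℂ l 0) (Prod.snd (0 : (Fin m → ℂ) × ℂ)) :=
      hla.differentiableAt.hasFDerivAt
    have hb2 : HasFDerivAt (fun w : (Fin m → ℂ) × ℂ => l w.2)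
        ((fderiv ℂ l 0).comp (ContinuousLinearMap.snd ℂ (Fin m → ℂ) ℂ)) 0 :=
      hl'.comp 0 hasFDerivAt_snd
    exact ha.unique hb2
  have hker : ∀ v : (Fin m → ℂ) × (Fin d → ℂ), T v = 0 → v = 0 := by
    intro v hv
    have hv1 : ((e : ((Fin m → ℂ) × ℂ) →L[ℂ] ((Fin m → ℂ) × ℂ)) (M v)).1 = 0 :=
      congrArg Prod.fst hv
    have hv2 : (eψ : (Fin d → ℂ) →L[ℂ] (Fin d → ℂ)) v.2 = 0 := congrArg Prod.snd hv
    have hv2' : v.2 = 0 := by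
      have := congrArg (⇑eψ.symm) hv2
      simpa using this
    have hMv : M v = (v.1, 0) := by
      simp [hM, ContinuousLinearMap.prod_apply, hv2', hDg]
    have hev2 : ((e : ((Fin m → ℂ) × ℂ) →L[ℂ] ((Fin m → ℂ) × ℂ)) (M v)).2 = 0 := by
      have := congrFun (congrArg (fun (S : ((Fin m → ℂ) × ℂ) →L[ℂ] ℂ) => (S : _ → ℂ)) hsnd) (M v)
      simp only [ContinuousLinearMap.comp_apply, ContinuousLinearMap.coe_snd'] at this
      rw [this, hMv]
      simp
    have hev : (e : ((Fin m → ℂ) × ℂ) →L[ℂ] ((Fin m → ℂ) × ℂ)) (M v) = 0 :=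
      Prod.ext hv1 hev2
    have hMv0 : M v = 0 := by
      have := congrArg (⇑e.symm) hev
      simpa using this
    have hv1' : v.1 = 0 := by
      rw [hMv] at hMv0
      exact congrArg Prod.fst hMv0
    exact Prod.ext hv1' hv2'
  have hTinj : Function.Injective T := by
    intro a b hab
    have : T (a - b) = 0 := by rw [map_sub, hab, sub_self]
    have := hker _ this
    exact sub_eq_zero.mp this
  obtain ⟨E, hE⟩ := exists_cle_of_injective T hTinj
  refine ⟨⟨?_, ?_⟩, E, by rw [hT.fderiv, ← hE]⟩
  · apply AnalyticAt.prod
    · have hinner : AnalyticAt ℂ (fun w : (Fin m → ℂ) × (Fin d → ℂ) =>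
          ((w.1, g w.2) : (Fin m → ℂ) × ℂ)) 0 :=
        analyticAt_fst.prod (hga.comp_of_eq analyticAt_snd rfl)
      exact hba.comp_of_eq hinner (by simp [hg0])
    · exact hψa.comp_of_eq analyticAt_snd rfl
  · show (hb (0, g 0), ψ 0) = 0
    rw [hg0, hψ0]
    rw [show ((0 : Fin m → ℂ), (0:ℂ)) = (0 : (Fin m → ℂ) × ℂ) from rfl, hb0]
    rfl

/-- Theorem 5.2 of the paper: if the one-parameter unfoldings `F` of `f` and `F'` of `f'`
are φ-equivalent, and `g` is `R`-equivalent to a quasi-homogeneous function germ, then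
the augmentations `A_{F,g}(f)` and `A_{F',g}(f')` are `A`-equivalent. -/
theorem phi_equiv_augmentations_Aequiv (n p d : ℕ)
    (f f' : (Fin n → ℂ) → (Fin p → ℂ))
    (fbar fbar' : (Fin n → ℂ) × ℂ → (Fin p → ℂ))
    (hf : IsMapGerm f) (hf' : IsMapGerm f')
    (hF : IsMapGerm (fun w : (Fin n → ℂ) × ℂ => (fbar w, w.2)))
    (hF' : IsMapGerm (fun w : (Fin n → ℂ) × ℂ => (fbar' w, w.2)))
    (hunf : ∀ᶠ x in 𝓝 (0 : Fin n → ℂ), fbar (x, 0) = f x)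
    (hunf' : ∀ᶠ x in 𝓝 (0 : Fin n → ℂ), fbar' (x, 0) = f' x)
    (hphi : PhiEquivUnf n p fbar fbar')
    (g : (Fin d → ℂ) → ℂ) (hg : IsMapGerm g)
    (hgqh : ∃ g₀ : (Fin d → ℂ) → ℂ, IsMapGerm g₀ ∧ QuasiHomogeneous d g₀ ∧
      ∃ φ : (Fin d → ℂ) → (Fin d → ℂ), IsBiholoGerm φ ∧ g =ᶠ[𝓝 0] g₀ ∘ φ) :
    AEquiv
      (fun w : (Fin n → ℂ) × (Fin d → ℂ) => (fbar (w.1, g w.2), w.2))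
      (fun w : (Fin n → ℂ) × (Fin d → ℂ) => (fbar' (w.1, g w.2), w.2)) := by
  obtain ⟨hbar2, kbar, l, hhB, hkB, hlB, heqphi⟩ := hphi
  obtain ⟨g₀, hg₀m, ⟨w, wi, hw, hwi, hqh⟩, φ, hφB, hgφ⟩ := hgqh
  obtain ⟨⟨hla, hl0⟩, el, hel⟩ := hlB
  have hld : deriv l 0 ≠ 0 := by
    have h1 : deriv l 0 = el 1 := by
      rw [← fderiv_apply_one_eq_deriv, hel]
      rfl
    rw [h1]
    intro h
    exact one_ne_zero (el.injective (by rw [h, map_zero]))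
  obtain ⟨hg₀a, hg₀0⟩ := hg₀m
  obtain ⟨ψ₀, hψ₀B, hψ₀g⟩ := exists_psi hg₀a hg₀0 hw hwi hqh hla hl0 hld
  obtain ⟨χ, hχB, hχl, hχr⟩ := exists_inverse hφB
  set ψt : (Fin d → ℂ) → (Fin d → ℂ) := fun z => χ (ψ₀ (φ z)) with hψt
  have hψtB : IsBiholoGerm ψt := hχB.comp (hψ₀B.comp hφB)
  have hφ0 : φ 0 = 0 := hφB.1.2
  have hψ₀0 : ψ₀ 0 = 0 := hψ₀B.1.2
  have Tφ : Filter.Tendsto φ (𝓝 0) (𝓝 0) := by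
    have := hφB.1.1.continuousAt
    rwa [ContinuousAt, hφ0] at this
  have Tψ₀ : Filter.Tendsto ψ₀ (𝓝 0) (𝓝 0) := by
    have := hψ₀B.1.1.continuousAt
    rwa [ContinuousAt, hψ₀0] at this
  have Tχ : Filter.Tendsto χ (𝓝 0) (𝓝 0) := by
    have := hχB.1.1.continuousAt
    rwa [ContinuousAt, hχB.1.2] at this
  have Tcomp : Filter.Tendsto (fun z => ψ₀ (φ z)) (𝓝 0) (𝓝 0) := Tψ₀.comp Tφ
  have Tψt : Filter.Tendsto ψt (𝓝 0) (𝓝 0) := Tχ.comp Tcomp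
  have hgψ : (fun z => g (ψt z)) =ᶠ[𝓝 0] fun z => l (g z) := by
    have e1 : ∀ᶠ z in 𝓝 (0 : Fin d → ℂ), g (ψt z) = g₀ (φ (ψt z)) := Tψt.eventually hgφ
    have e2 : ∀ᶠ z in 𝓝 (0 : Fin d → ℂ), φ (χ (ψ₀ (φ z))) = ψ₀ (φ z) := Tcomp.eventually hχr
    have e3 : ∀ᶠ z in 𝓝 (0 : Fin d → ℂ), g₀ (ψ₀ (φ z)) = l (g₀ (φ z)) := Tφ.eventually hψ₀g
    have e4 : ∀ᶠ z in 𝓝 (0 : Fin d → ℂ), g z = g₀ (φ z) := hgφ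
    filter_upwards [e1, e2, e3, e4] with z h1 h2 h3 h4
    calc g (ψt z) = g₀ (φ (ψt z)) := h1
      _ = g₀ (ψ₀ (φ z)) := by rw [show φ (ψt z) = ψ₀ (φ z) from h2]
      _ = l (g₀ (φ z)) := h3
      _ = l (g z) := by rw [← h4]
  refine ⟨fun w : (Fin n → ℂ) × (Fin d → ℂ) => (hbar2 (w.1, g w.2), ψt w.2),
    fun W : (Fin p → ℂ) × (Fin d → ℂ) => (kbar (W.1, g W.2), ψt W.2),
    biholo_aux hbar2 l g ψt hhB hg hψtB,
    biholo_aux kbar l g ψt hkB hg hψtB, ?_⟩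
  have hfirst : ∀ᶠ v in 𝓝 (0 : (Fin n → ℂ) × ℂ),
      fbar' (hbar2 v, l v.2) = kbar (fbar v, v.2) := by
    filter_upwards [heqphi] with v hv
    exact congrArg Prod.fst hv
  have hgc : Filter.Tendsto g (𝓝 0) (𝓝 0) := by
    have := hg.1.continuousAt
    rwa [ContinuousAt, hg.2] at this
  have Tm : Filter.Tendsto (fun w : (Fin n → ℂ) × (Fin d → ℂ) =>
      ((w.1, g w.2) : (Fin n → ℂ) × ℂ)) (𝓝 0) (𝓝 0) := by
    have t1 : Filter.Tendsto (fun w : (Fin n → ℂ) × (Fin d → ℂ) => w.1) (𝓝 0) (𝓝 0) :=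
      continuousAt_fst
    have t2 : Filter.Tendsto (fun w : (Fin n → ℂ) × (Fin d → ℂ) => g w.2) (𝓝 0) (𝓝 0) := by
      have tsnd : Filter.Tendsto (fun w : (Fin n → ℂ) × (Fin d → ℂ) => w.2) (𝓝 0) (𝓝 0) :=
        continuousAt_snd
      exact hgc.comp tsnd
    exact t1.prodMk_nhds t2
  have hb2 : ∀ᶠ v : (Fin n → ℂ) × (Fin d → ℂ) in 𝓝 0,
      fbar' (hbar2 (v.1, g v.2), l (g v.2)) = kbar (fbar (v.1, g v.2), g v.2) :=
    Tm.eventually hfirst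
  have hc2 : ∀ᶠ v : (Fin n → ℂ) × (Fin d → ℂ) in 𝓝 0, g (ψt v.2) = l (g v.2) := by
    have tsnd : Filter.Tendsto (fun w : (Fin n → ℂ) × (Fin d → ℂ) => w.2) (𝓝 0) (𝓝 0) :=
      continuousAt_snd
    exact tsnd.eventually hgψ
  filter_upwards [hb2, hc2] with v h1 h2
  show (fbar' (hbar2 (v.1, g v.2), g (ψt v.2)), ψt v.2)
      = (kbar (fbar (v.1, g v.2), g v.2), ψt v.2)
  rw [h2, h1]
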